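/- For the right B(Z_2)-modules i_k B(Z_2) (k = 0,1,2,3), the F_2-dimensions are: dim i_0 B(Z_2) = 13, dim i_1 B(Z_2) = 11, dim i_2 B(Z_2) = 5, dim i_3 B(Z_2) = 3, and these dimensions sum to 32 = dim B(Z_2). -/

import Mathlib

open FreeAlgebra

/-- Generators of the path algebra `B(Z_2)`: four vertex idempotents and seven arrows. -/
inductive Gen2 : Type
  | e : Fin 4 → Gen2
  | r : Fin 7 → Gen2

/-- Sources of the arrows ρ₁,…,ρ₇. -/
def src2 : Fin 7 → Fin 4 := ![0, 1, 0, 1, 2, 3, 2]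

/-- Targets of the arrows ρ₁,…,ρ₇. -/
def tgt2 : Fin 7 → Fin 4 := ![1, 0, 1, 2, 3, 2, 3]

/-- Relations presenting `B(Z_2)` as a quotient of the free algebra: the path-algebra
relations for the quiver together with ρ₁ρ₄ = ρ₄ρ₇ = ρ₂ρ₁ = ρ₃ρ₂ = ρ₆ρ₅ = ρ₇ρ₆ = 0. -/
inductive Rel2 : FreeAlgebra (ZMod 2) Gen2 → FreeAlgebra (ZMod 2) Gen2 → Prop
  | idem (k : Fin 4) :
      Rel2 (ι (ZMod 2) (Gen2.e k) * ι (ZMod 2) (Gen2.e k)) (ι (ZMod 2) (Gen2.e k))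
  | orth (k l : Fin 4) (h : k ≠ l) : Rel2 (ι (ZMod 2) (Gen2.e k) * ι (ZMod 2) (Gen2.e l)) 0
  | sum : Rel2 (∑ k : Fin 4, ι (ZMod 2) (Gen2.e k)) 1
  | source (m : Fin 7) :
      Rel2 (ι (ZMod 2) (Gen2.e (src2 m)) * ι (ZMod 2) (Gen2.r m)) (ι (ZMod 2) (Gen2.r m))
  | target (m : Fin 7) :
      Rel2 (ι (ZMod 2) (Gen2.r m) * ι (ZMod 2) (Gen2.e (tgt2 m))) (ι (ZMod 2) (Gen2.r m))
  | rel14 : Rel2 (ι (ZMod 2) (Gen2.r 0) * ι (ZMod 2) (Gen2.r 3)) 0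
  | rel47 : Rel2 (ι (ZMod 2) (Gen2.r 3) * ι (ZMod 2) (Gen2.r 6)) 0
  | rel21 : Rel2 (ι (ZMod 2) (Gen2.r 1) * ι (ZMod 2) (Gen2.r 0)) 0
  | rel32 : Rel2 (ι (ZMod 2) (Gen2.r 2) * ι (ZMod 2) (Gen2.r 1)) 0
  | rel65 : Rel2 (ι (ZMod 2) (Gen2.r 5) * ι (ZMod 2) (Gen2.r 4)) 0
  | rel76 : Rel2 (ι (ZMod 2) (Gen2.r 6) * ι (ZMod 2) (Gen2.r 5)) 0

/-- The genus-2 bordered algebra `B(Z_2)`. -/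
abbrev B2 : Type := RingQuot Rel2

/-- The idempotents i₀, i₁, i₂, i₃ in `B(Z_2)`. -/
noncomputable def idem2 (k : Fin 4) : B2 :=
  RingQuot.mkAlgHom (ZMod 2) Rel2 (ι (ZMod 2) (Gen2.e k))

/-- The arrows ρ₁,…,ρ₇ in `B(Z_2)` (indexed by `Fin 7`). -/
noncomputable def arr2 (m : Fin 7) : B2 :=
  RingQuot.mkAlgHom (ZMod 2) Rel2 (ι (ZMod 2) (Gen2.r m))

/-- The arrow ρ_k in `B(Z_2)`, using 1-based indexing; `0` for out-of-range indices. -/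
noncomputable def ρ2 (k : ℕ) : B2 :=
  if h : 1 ≤ k ∧ k ≤ 7 then arr2 ⟨k - 1, by omega⟩ else 0

/-- The chord ρ_{[i,j]} = ρ_i ρ_{i+1} ⋯ ρ_j in `B(Z_2)` (1-based indices). -/
noncomputable def chord2 (i j : ℕ) : B2 :=
  ((List.range' i (j + 1 - i)).map ρ2).prod


/-- The F_2-subspace i_k · B(Z_2) of B(Z_2), i.e. the right module generated by i_k. -/
noncomputable def rightMod2 (k : Fin 4) : Submodule (ZMod 2) B2 :=
  LinearMap.range (LinearMap.mulLeft (ZMod 2) (idem2 k))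

/-! ### Auxiliary combinatorics -/

abbrev Pth := (Fin 4) ⊕ {p : Fin 7 × Fin 7 // p.1 ≤ p.2}

def mulP : Pth → Pth → Option Pth
  | .inl k, .inl l => if k = l then some (.inl k) else none
  | .inl k, .inr s => if src2 s.1.1 = k then some (.inr s) else none
  | .inr s, .inl k => if tgt2 s.1.2 = k then some (.inr s) else none
  | .inr s, .inr t =>
      if hc : (t.1.1 : ℕ) = (s.1.2 : ℕ) + 1 then
        some (.inr ⟨(s.1.1, t.1.2), by
          have h1 := Fin.le_def.mp s.2; have h2 := Fin.le_def.mp t.2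
          exact Fin.le_def.mpr (show ((s.1.1 : Fin 7) :ℕ) ≤ ((t.1.2 : Fin 7) : ℕ) by omega)⟩)
      else none

lemma mulP_assoc : ∀ p q r : Pth,
    (mulP p q).bind (fun s => mulP s r) = (mulP q r).bind (fun s => mulP p s) := by decide

def Mat (p : Pth) : Matrix Pth Pth (ZMod 2) := fun q r => if mulP p r = some q then 1 else 0

lemma Mat_mul (p q : Pth) : Mat p * Mat q = (mulP p q).elim 0 Mat := by
  ext a b
  have hassoc := mulP_assoc p q b
  rw [Matrix.mul_apply]
  rcases hq : mulP q b with _ | c0 <;> rcases hpq : mulP p q with _ | s <;>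
      rw [hq, hpq] at hassoc <;> simp only [Option.bind] at hassoc
  · simp [Mat, hq]
  · simp [Mat, hq, hassoc]
  · rw [Fintype.sum_eq_single c0 (fun c hc => by simp [Mat, hq, (Ne.symm hc)])]
    simp [Mat, ← hassoc]
  · rw [Fintype.sum_eq_single c0 (fun c hc => by simp [Mat, hq, (Ne.symm hc)])]
    simp only [Option.elim, Mat, hq, ← hassoc]
    simp

def gmat : Gen2 → Matrix Pth Pth (ZMod 2)
  | .e k => Mat (.inl k)
  | .r m => Mat (.inr ⟨(m, m), le_refl m⟩)

lemma sumMat : ∑ k : Fin 4, Mat (Sum.inl k) = 1 := by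
  ext a b
  rw [Matrix.sum_apply]
  rcases b with l | s
  · rw [Fintype.sum_eq_single l (fun k hk => by simp [Mat, mulP, hk])]
    by_cases h : a = Sum.inl l <;> simp [Mat, mulP, Matrix.one_apply, h, eq_comm]
  · rw [Fintype.sum_eq_single (src2 s.1.1) (fun k hk => by simp [Mat, mulP, Ne.symm hk])]
    by_cases h : a = Sum.inr s <;> simp [Mat, mulP, Matrix.one_apply, h, eq_comm]

lemma gmat_rel : ∀ ⦃x y : FreeAlgebra (ZMod 2) Gen2⦄, Rel2 x y →
    FreeAlgebra.lift (ZMod 2) gmat x = FreeAlgebra.lift (ZMod 2) gmat y := by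
  intro x y h
  induction h with
  | idem k =>
      simp only [map_mul, lift_ι_apply, gmat, Mat_mul]
      simp [mulP]
  | orth k l h =>
      simp only [map_mul, map_zero, lift_ι_apply, gmat, Mat_mul]
      simp [mulP, h]
  | sum => simp only [map_sum, map_one, lift_ι_apply, gmat]; exact sumMat
  | source m =>
      simp only [map_mul, lift_ι_apply, gmat, Mat_mul]
      simp [mulP]
  | target m =>
      simp only [map_mul, lift_ι_apply, gmat, Mat_mul]
      simp [mulP]
  | rel14 => simp only [map_mul, map_zero, lift_ι_apply, gmat, Mat_mul]; decide
  | rel47 => simp only [map_mul, map_zero, lift_ι_apply, gmat, Mat_mul]; decide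
  | rel21 => simp only [map_mul, map_zero, lift_ι_apply, gmat, Mat_mul]; decide
  | rel32 => simp only [map_mul, map_zero, lift_ι_apply, gmat, Mat_mul]; decide
  | rel65 => simp only [map_mul, map_zero, lift_ι_apply, gmat, Mat_mul]; decide
  | rel76 => simp only [map_mul, map_zero, lift_ι_apply, gmat, Mat_mul]; decide

noncomputable def phi : B2 →ₐ[ZMod 2] Matrix Pth Pth (ZMod 2) :=
  RingQuot.liftAlgHom (ZMod 2) ⟨FreeAlgebra.lift (ZMod 2) gmat, gmat_rel⟩

lemma phi_mk (x : FreeAlgebra (ZMod 2) Gen2) :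
    phi (RingQuot.mkAlgHom (ZMod 2) Rel2 x) = FreeAlgebra.lift (ZMod 2) gmat x :=
  RingQuot.liftAlgHom_mkAlgHom_apply _ _ _ _

/-! ### Algebra lemmas in B2 -/

lemma mkrel {x y : FreeAlgebra (ZMod 2) Gen2} (h : Rel2 x y) :
    RingQuot.mkAlgHom (ZMod 2) Rel2 x = RingQuot.mkAlgHom (ZMod 2) Rel2 y :=
  RingQuot.mkAlgHom_rel _ h

lemma Emul (k l : Fin 4) : idem2 k * idem2 l = if k = l then idem2 k else 0 := by
  split
  · next h => subst h; rw [idem2, ← map_mul]; exact mkrel (Rel2.idem k)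
  · next h => rw [idem2, idem2, ← map_mul, mkrel (Rel2.orth k l h), map_zero]

lemma sumE : ∑ k : Fin 4, idem2 k = 1 := by
  simp only [idem2, ← map_sum]
  rw [mkrel Rel2.sum, map_one]

lemma srcR (m : Fin 7) : idem2 (src2 m) * arr2 m = arr2 m := by
  rw [idem2, arr2, ← map_mul]; exact mkrel (Rel2.source m)

lemma Rtgt (m : Fin 7) : arr2 m * idem2 (tgt2 m) = arr2 m := by
  rw [idem2, arr2, ← map_mul]; exact mkrel (Rel2.target m)

lemma ER (k : Fin 4) (m : Fin 7) :
    idem2 k * arr2 m = if k = src2 m then arr2 m else 0 := by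
  split
  · next h => subst h; exact srcR m
  · next h =>
      calc idem2 k * arr2 m = idem2 k * (idem2 (src2 m) * arr2 m) := by rw [srcR]
        _ = (idem2 k * idem2 (src2 m)) * arr2 m := (mul_assoc _ _ _).symm
        _ = 0 := by rw [Emul, if_neg h, zero_mul]

lemma RE (m : Fin 7) (k : Fin 4) :
    arr2 m * idem2 k = if k = tgt2 m then arr2 m else 0 := by
  split
  · next h => subst h; exact Rtgt m
  · next h =>
      calc arr2 m * idem2 k = (arr2 m * idem2 (tgt2 m)) * idem2 k := by rw [Rtgt]
        _ = arr2 m * (idem2 (tgt2 m) * idem2 k) := mul_assoc _ _ _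
        _ = 0 := by rw [Emul, if_neg (fun hh => h hh.symm), mul_zero]

lemma RRnc (a b : Fin 7) (h : tgt2 a ≠ src2 b) : arr2 a * arr2 b = 0 := by
  calc arr2 a * arr2 b = (arr2 a * idem2 (tgt2 a)) * (idem2 (src2 b) * arr2 b) := by
        rw [Rtgt, srcR]
    _ = arr2 a * ((idem2 (tgt2 a) * idem2 (src2 b)) * arr2 b) := by
        rw [mul_assoc, mul_assoc]
    _ = 0 := by rw [Emul, if_neg h, zero_mul, mul_zero]

lemma RR0 (a b : Fin 7) (h : (b : ℕ) ≠ (a : ℕ) + 1) : arr2 a * arr2 b = 0 := by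
  fin_cases a <;> fin_cases b <;>
    first
      | (exfalso; exact h rfl)
      | exact RRnc _ _ (by decide)
      | (rw [arr2, arr2, ← map_mul]
         first
           | exact (mkrel Rel2.rel14).trans (map_zero _)
           | exact (mkrel Rel2.rel47).trans (map_zero _)
           | exact (mkrel Rel2.rel21).trans (map_zero _)
           | exact (mkrel Rel2.rel32).trans (map_zero _)
           | exact (mkrel Rel2.rel65).trans (map_zero _)
           | exact (mkrel Rel2.rel76).trans (map_zero _))

/-! ### Chords -/

noncomputable def Rn (n : ℕ) : B2 := if h : n < 7 then arr2 ⟨n, h⟩ else 1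

noncomputable def Cl (i j : ℕ) : B2 := ((List.range' i (j + 1 - i)).map Rn).prod

lemma Cl_nil {i j : ℕ} (h : j + 1 ≤ i) : Cl i j = 1 := by
  rw [Cl, show j + 1 - i = 0 from by omega]
  simp

lemma Cl_cons {i j : ℕ} (h : i ≤ j) : Cl i j = Rn i * Cl (i + 1) j := by
  rw [Cl, Cl, show j + 1 - i = (j + 1 - (i+1)) + 1 from by omega, List.range'_succ]
  simp

lemma Cl_single {i : ℕ} (h : i < 7) : Cl i i = arr2 ⟨i, h⟩ := by
  rw [Cl_cons le_rfl, Cl_nil le_rfl, mul_one, Rn, dif_pos h]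

lemma E_Cl (k : Fin 4) (i j : ℕ) (hij : i ≤ j) (hj : j < 7) :
    idem2 k * Cl i j = if k = src2 ⟨i, by omega⟩ then Cl i j else 0 := by
  rw [Cl_cons hij, ← mul_assoc, Rn, dif_pos (show i < 7 by omega), ER]
  split
  · next h => rfl
  · next h => rw [zero_mul]

lemma Cl_E (i j : ℕ) (hij : i ≤ j) (hj : j < 7) (k : Fin 4) :
    Cl i j * idem2 k = if k = tgt2 ⟨j, hj⟩ then Cl i j else 0 := by
  rcases eq_or_lt_of_le hij with he | hlt
  · subst he; rw [Cl_single hj, RE]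
  · have ih := Cl_E (i + 1) j hlt hj k
    rw [Cl_cons hij, mul_assoc, ih]
    split
    · rw [← Cl_cons hij]
    · rw [mul_zero]
termination_by j - i
decreasing_by omega

lemma Cl_R0 (i j b : ℕ) (hij : i ≤ j) (hj : j < 7) (hb : b < 7) (hne : b ≠ j + 1) :
    Cl i j * arr2 ⟨b, hb⟩ = 0 := by
  rcases eq_or_lt_of_le hij with he | hlt
  · subst he; rw [Cl_single hj]; exact RR0 ⟨i, hj⟩ ⟨b, hb⟩ hne
  · rw [Cl_cons hij, mul_assoc, Cl_R0 (i + 1) j b hlt hj hb hne, mul_zero]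
termination_by j - i
decreasing_by omega

lemma Cl_glue (i j j' : ℕ) (hij : i ≤ j) (hjj : j + 1 ≤ j') :
    Cl i j * Cl (j + 1) j' = Cl i j' := by
  rcases eq_or_lt_of_le hij with he | hlt
  · subst he
    have hC : Cl i i = Rn i := by rw [Cl_cons le_rfl, Cl_nil le_rfl, mul_one]
    rw [hC, ← Cl_cons (show i ≤ j' by omega)]
  · rw [Cl_cons hij, mul_assoc, Cl_glue (i + 1) j j' hlt hjj,
      ← Cl_cons (show i ≤ j' by omega)]
termination_by j - i
decreasing_by omega

/-! ### The spanning family -/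

noncomputable def bB : Pth → B2
  | .inl k => idem2 k
  | .inr s => Cl (s.1.1 : ℕ) (s.1.2 : ℕ)

lemma mulB (p q : Pth) : bB p * bB q = (mulP p q).elim 0 bB := by
  rcases p with k | ⟨⟨i, j⟩, hij⟩ <;> rcases q with l | ⟨⟨i', j'⟩, hij'⟩
  · show idem2 k * idem2 l = _
    rw [Emul]
    by_cases h : k = l
    · rw [if_pos h, show mulP (.inl k) (.inl l) = some (.inl k) from by simp [mulP, h]]
      subst h; rfl
    · rw [if_neg h, show mulP (.inl k) (.inl l) = none from by simp [mulP, h]]; rfl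
  · have h1 : (i' : ℕ) ≤ (j' : ℕ) := hij'
    show idem2 k * Cl (i' : ℕ) (j' : ℕ) = _
    rw [E_Cl k _ _ h1 j'.isLt]
    by_cases h : src2 i' = k
    · rw [if_pos h.symm,
        show mulP (.inl k) (.inr ⟨(i', j'), hij'⟩) = some (.inr ⟨(i', j'), hij'⟩) from by
          simp [mulP, h]]
      rfl
    · rw [if_neg (fun hh => h hh.symm),
        show mulP (.inl k) (.inr ⟨(i', j'), hij'⟩) = none from by simp [mulP, h]]
      rfl
  · have h1 : (i : ℕ) ≤ (j : ℕ) := hij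
    show Cl (i : ℕ) (j : ℕ) * idem2 l = _
    rw [Cl_E _ _ h1 j.isLt l]
    by_cases h : tgt2 j = l
    · rw [if_pos h.symm,
        show mulP (.inr ⟨(i, j), hij⟩) (.inl l) = some (.inr ⟨(i, j), hij⟩) from by
          simp [mulP, h]]
      rfl
    · rw [if_neg (fun hh => h hh.symm),
        show mulP (.inr ⟨(i, j), hij⟩) (.inl l) = none from by simp [mulP, h]]
      rfl
  · have h1 : (i : ℕ) ≤ (j : ℕ) := hij
    have h1' : (i' : ℕ) ≤ (j' : ℕ) := hij'
    show Cl (i : ℕ) (j : ℕ) * Cl (i' : ℕ) (j' : ℕ) = _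
    by_cases hc : (i' : ℕ) = (j : ℕ) + 1
    · rw [show Cl (i' : ℕ) (j' : ℕ) = Cl ((j : ℕ) + 1) (j' : ℕ) from by rw [hc],
        Cl_glue _ _ _ h1 (by omega)]
      rw [show mulP (.inr ⟨(i, j), hij⟩) (.inr ⟨(i', j'), hij'⟩)
            = some (.inr ⟨(i, j'),
              Fin.le_def.mpr (show ((i : Fin 7) : ℕ) ≤ ((j' : Fin 7) : ℕ) by omega)⟩) from by
          simp [mulP, hc]]
      rfl
    · rw [Cl_cons h1', ← mul_assoc, Rn, dif_pos i'.isLt,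
        Cl_R0 _ _ _ h1 j.isLt i'.isLt (by omega), zero_mul]
      rw [show mulP (.inr ⟨(i, j), hij⟩) (.inr ⟨(i', j'), hij'⟩) = none from by
          simp [mulP, hc]]
      rfl

/-! ### Independence via the regular representation -/

lemma phi_idem (k : Fin 4) : phi (idem2 k) = Mat (.inl k) := by
  rw [idem2, phi_mk, lift_ι_apply]; rfl

lemma phi_arr (m : Fin 7) : phi (arr2 m) = Mat (.inr ⟨(m, m), le_refl m⟩) := by
  rw [arr2, phi_mk, lift_ι_apply]; rfl

lemma phi_Cl (i j : ℕ) (hij : i ≤ j) (hj : j < 7) :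
    phi (Cl i j) = Mat (.inr ⟨(⟨i, by omega⟩, ⟨j, hj⟩), Fin.le_def.mpr hij⟩) := by
  rcases eq_or_lt_of_le hij with he | hlt
  · subst he; rw [Cl_single hj, phi_arr]
  · rw [Cl_cons hij, map_mul, show Rn i = arr2 ⟨i, by omega⟩ from dif_pos _,
      phi_arr, phi_Cl (i + 1) j hlt hj, Mat_mul,
      show mulP (.inr ⟨(⟨i, by omega⟩, ⟨i, by omega⟩), le_refl _⟩)
          (.inr ⟨(⟨i + 1, by omega⟩, ⟨j, hj⟩), Fin.le_def.mpr hlt⟩)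
        = some (.inr ⟨(⟨i, by omega⟩, ⟨j, hj⟩), Fin.le_def.mpr hij⟩) from by
        simp [mulP]]
    rfl
termination_by j - i
decreasing_by omega

lemma phi_bB (p : Pth) : phi (bB p) = Mat p := by
  rcases p with k | ⟨⟨i, j⟩, hij⟩
  · exact phi_idem k
  · show phi (Cl (i : ℕ) (j : ℕ)) = _
    rw [phi_Cl _ _ (show (i:ℕ) ≤ (j:ℕ) from hij) j.isLt]

def v0 : Pth → ZMod 2 := fun p => match p with | .inl _ => 1 | .inr _ => 0

set_option maxRecDepth 100000 in
lemma matVec : ∀ p : Pth, (Mat p).mulVec v0 = Pi.single p 1 := by decide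

noncomputable def psi : B2 →ₗ[ZMod 2] (Pth → ZMod 2) where
  toFun x := (phi x).mulVec v0
  map_add' x y := by rw [map_add, Matrix.add_mulVec]
  map_smul' c x := by rw [map_smul, RingHom.id_apply, Matrix.smul_mulVec]

lemma psi_bB (p : Pth) : psi (bB p) = Pi.single p 1 := by
  show (phi (bB p)).mulVec v0 = _
  rw [phi_bB]; exact matVec p

lemma bB_li : LinearIndependent (ZMod 2) bB := by
  apply LinearIndependent.of_comp psi
  have h : ⇑psi ∘ bB = fun p : Pth => (Pi.single p 1 : Pth → ZMod 2) :=
    funext fun p => psi_bB p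
  have h2 : (fun p : Pth => (Pi.single p 1 : Pth → ZMod 2)) = ⇑(Pi.basisFun (ZMod 2) Pth) := by
    funext p
    rw [Pi.basisFun_apply]
  rw [h, h2]
  exact (Pi.basisFun (ZMod 2) Pth).linearIndependent

/-! ### Spanning -/

abbrev Sb : Submodule (ZMod 2) B2 := Submodule.span (ZMod 2) (Set.range bB)

lemma one_mem_Sb : (1 : B2) ∈ Sb := by
  rw [← sumE]
  exact Submodule.sum_mem _ fun k _ => Submodule.subset_span ⟨.inl k, rfl⟩

lemma mul_mem_Sb {x y : B2} (hx : x ∈ Sb) (hy : y ∈ Sb) : x * y ∈ Sb := by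
  induction hx using Submodule.span_induction with
  | mem a ha =>
      obtain ⟨p, rfl⟩ := ha
      induction hy using Submodule.span_induction with
      | mem b hb =>
          obtain ⟨q, rfl⟩ := hb
          rw [mulB]
          rcases h : mulP p q with _ | r
          · exact Submodule.zero_mem _
          · exact Submodule.subset_span ⟨r, rfl⟩
      | zero => rw [mul_zero]; exact Submodule.zero_mem _
      | add a b _ _ ha hb => rw [mul_add]; exact Submodule.add_mem _ ha hb
      | smul c a _ ha => rw [mul_smul_comm]; exact Submodule.smul_mem _ _ ha
  | zero => rw [zero_mul]; exact Submodule.zero_mem _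
  | add a b _ _ ha hb => rw [add_mul]; exact Submodule.add_mem _ ha hb
  | smul c a _ ha => rw [smul_mul_assoc]; exact Submodule.smul_mem _ _ ha

lemma bB_span : Sb = ⊤ := by
  rw [Submodule.eq_top_iff']
  intro x
  obtain ⟨y, rfl⟩ := RingQuot.mkAlgHom_surjective (ZMod 2) Rel2 x
  induction y using FreeAlgebra.induction with
  | grade0 r =>
      rw [AlgHom.commutes, Algebra.algebraMap_eq_smul_one]
      exact Submodule.smul_mem _ _ one_mem_Sb
  | grade1 g =>
      cases g with
      | e k => exact Submodule.subset_span ⟨.inl k, rfl⟩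
      | r m =>
          have : RingQuot.mkAlgHom (ZMod 2) Rel2 (ι (ZMod 2) (Gen2.r m)) =
              bB (.inr ⟨(m, m), le_refl m⟩) := by
            show arr2 m = Cl (m : ℕ) (m : ℕ)
            rw [Cl_single m.isLt]
          rw [this]
          exact Submodule.subset_span ⟨_, rfl⟩
  | mul a b ha hb => rw [map_mul]; exact mul_mem_Sb ha hb
  | add a b ha hb => rw [map_add]; exact Submodule.add_mem _ ha hb

noncomputable def bas : Module.Basis Pth (ZMod 2) B2 :=
  Module.Basis.mk bB_li (le_of_eq bB_span.symm)

/-! ### Dimension counts -/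

def startsB (k : Fin 4) : Pth → Bool
  | .inl l => l = k
  | .inr s => src2 s.1.1 = k

lemma E_bB (k : Fin 4) (p : Pth) :
    idem2 k * bB p = if startsB k p then bB p else 0 := by
  have h := mulB (.inl k) p
  rcases p with l | s
  · rw [show bB (Sum.inl k) = idem2 k from rfl] at h
    rw [h]
    by_cases hk : k = l
    · subst hk
      rw [show mulP (.inl k) (.inl k) = some (.inl k) from by simp [mulP]]
      simp [startsB]
    · rw [show mulP (.inl k) (.inl l) = none from by simp [mulP, hk]]
      simp [startsB, Ne.symm hk, hk]
  · rw [show bB (Sum.inl k) = idem2 k from rfl] at h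
    rw [h]
    by_cases hk : src2 s.1.1 = k
    · rw [show mulP (.inl k) (.inr s) = some (.inr s) from by simp [mulP, hk]]
      simp [startsB, hk]
    · rw [show mulP (.inl k) (.inr s) = none from by simp [mulP, hk]]
      simp [startsB, hk]

lemma rm_eq (k : Fin 4) :
    rightMod2 k = Submodule.span (ZMod 2) (bB '' {p | startsB k p}) := by
  apply le_antisymm
  · rintro x ⟨y, rfl⟩
    have hy : y ∈ Sb := by rw [bB_span]; trivial
    show idem2 k * y ∈ _
    induction hy using Submodule.span_induction with
    | mem a ha =>
        obtain ⟨p, rfl⟩ := ha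
        rw [E_bB]
        by_cases hp : startsB k p
        · rw [if_pos hp]; exact Submodule.subset_span ⟨p, hp, rfl⟩
        · rw [if_neg hp]; exact Submodule.zero_mem _
    | zero => rw [mul_zero]; exact Submodule.zero_mem _
    | add a b _ _ ha hb => rw [mul_add]; exact Submodule.add_mem _ ha hb
    | smul c a _ ha => rw [mul_smul_comm]; exact Submodule.smul_mem _ _ ha
  · rw [Submodule.span_le]
    rintro x ⟨p, hp, rfl⟩
    refine ⟨bB p, ?_⟩
    show idem2 k * bB p = bB p
    rw [E_bB, if_pos (show startsB k p = true from hp)]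

lemma rm_rank (k : Fin 4) :
    Module.finrank (ZMod 2) (rightMod2 k) = Fintype.card {p : Pth // startsB k p} := by
  have li : LinearIndependent (ZMod 2) (fun p : {p : Pth // startsB k p} => bB p.1) :=
    bB_li.comp _ Subtype.val_injective
  have him : bB '' {p | startsB k p} =
      Set.range (fun p : {p : Pth // startsB k p} => bB p.1) := by
    exact Set.image_eq_range _ _
  rw [rm_eq, him, finrank_span_eq_card li]


/-- dim i_0 B = 13, dim i_1 B = 11, dim i_2 B = 5, dim i_3 B = 3,
summing to 32 = dim B(Z_2). -/
theorem stmt_8 :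
    Module.finrank (ZMod 2) (rightMod2 0) = 13 ∧
    Module.finrank (ZMod 2) (rightMod2 1) = 11 ∧
    Module.finrank (ZMod 2) (rightMod2 2) = 5 ∧
    Module.finrank (ZMod 2) (rightMod2 3) = 3 ∧
    Module.finrank (ZMod 2) (rightMod2 0) + Module.finrank (ZMod 2) (rightMod2 1) +
      Module.finrank (ZMod 2) (rightMod2 2) + Module.finrank (ZMod 2) (rightMod2 3) = 32 ∧
    Module.finrank (ZMod 2) B2 = 32 := by
  have h0 : Module.finrank (ZMod 2) (rightMod2 0) = 13 := by
    rw [rm_rank]; decide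
  have h1 : Module.finrank (ZMod 2) (rightMod2 1) = 11 := by
    rw [rm_rank]; decide
  have h2 : Module.finrank (ZMod 2) (rightMod2 2) = 5 := by
    rw [rm_rank]; decide
  have h3 : Module.finrank (ZMod 2) (rightMod2 3) = 3 := by
    rw [rm_rank]; decide
  have hB : Module.finrank (ZMod 2) B2 = 32 := by
    rw [Module.finrank_eq_card_basis bas]; decide
  exact ⟨h0, h1, h2, h3, by omega, hB⟩
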